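/- Every finite two-player zero-sum game has a value: for any real-valued payoff matrix A (m×n), the maximum over mixed strategies x of the minimum over mixed strategies y of xᵀAy equals the minimum over y of the maximum over x of xᵀAy. -/

import Mathlib

open Matrix Finset

lemma minimax_alternative {m n : ℕ} (hm : 0 < m) (A : Matrix (Fin m) (Fin n) ℝ) :
    (∃ y ∈ stdSimplex ℝ (Fin n), ∀ i, A.mulVec y i ≤ 0) ∨
    (∃ x ∈ stdSimplex ℝ (Fin m), ∀ j, 0 < ∑ i, x i * A i j) := by
  classical
  set g : Fin n ⊕ Fin m → (Fin m → ℝ) :=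
    Sum.elim (fun j i => A i j) (fun i => Pi.single i 1) with hg
  by_cases h0 : (0 : Fin m → ℝ) ∈ convexHull ℝ (Set.range g)
  · left
    rw [convexHull_range_eq_exists_affineCombination] at h0
    obtain ⟨s, w, hw₀, hw₁, hw⟩ := h0
    set W : Fin n ⊕ Fin m → ℝ := fun i => if i ∈ s then w i else 0 with hWdef
    have hW₀ : ∀ i, 0 ≤ W i := by
      intro i
      by_cases h : i ∈ s
      · simpa [hWdef, h] using hw₀ i h
      · simp [hWdef, h]
    have hW₁ : ∑ i, W i = 1 := by
      calc ∑ i, W i = ∑ i ∈ univ ∩ s, w i := Finset.sum_ite_mem _ _ _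
        _ = 1 := by rw [Finset.univ_inter]; exact hw₁
    have hWg : ∑ i, W i • g i = 0 := by
      rw [affineCombination_eq_linear_combination s g w hw₁] at hw
      calc ∑ i, W i • g i = ∑ i ∈ univ, (if i ∈ s then w i • g i else 0) :=
            Finset.sum_congr rfl (fun i _ => by by_cases h : i ∈ s <;> simp [hWdef, h])
        _ = ∑ i ∈ univ ∩ s, w i • g i := Finset.sum_ite_mem _ _ _
        _ = 0 := by rw [Finset.univ_inter]; exact hw
    have hsplit : (∑ j, W (Sum.inl j) • (fun i => A i j))
        + (∑ i, W (Sum.inr i) • (Pi.single i 1 : Fin m → ℝ)) = 0 := by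
      rw [← hWg, Fintype.sum_sum_type]
      simp [hg]
    set t : ℝ := ∑ j, W (Sum.inl j) with ht
    have ht0 : 0 ≤ t := Finset.sum_nonneg fun j _ => hW₀ _
    have htpos : 0 < t := by
      rcases ht0.lt_or_eq with h | h
      · exact h
      · exfalso
        have hz : ∀ j, W (Sum.inl j) = 0 := fun j =>
          (Finset.sum_eq_zero_iff_of_nonneg (fun j _ => hW₀ (Sum.inl j))).mp h.symm j (mem_univ j)
        have h1 : ∑ i, W (Sum.inr i) = 1 := by
          rw [Fintype.sum_sum_type] at hW₁
          simpa [hz] using hW₁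
        have h2 : ∀ i, W (Sum.inr i) = 0 := by
          intro i
          have := congrFun hsplit i
          simp only [Pi.add_apply, Finset.sum_apply, Pi.smul_apply, smul_eq_mul,
            Pi.single_apply, Pi.zero_apply, hz, zero_mul, Finset.sum_const_zero, zero_add,
            mul_ite, mul_one, mul_zero] at this
          rw [Finset.sum_ite_eq univ i (fun k => W (Sum.inr k))] at this
          simpa using this
        simp [h2] at h1
    refine ⟨fun j => W (Sum.inl j) / t, ⟨fun j => div_nonneg (hW₀ _) ht0, ?_⟩, ?_⟩
    · rw [← Finset.sum_div, ← ht, div_self htpos.ne']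
    · intro i
      have hcoord : ∑ j, W (Sum.inl j) * A i j = -(W (Sum.inr i)) := by
        have := congrFun hsplit i
        simp only [Pi.add_apply, Finset.sum_apply, Pi.smul_apply, smul_eq_mul,
          Pi.single_apply, Pi.zero_apply, mul_ite, mul_one, mul_zero] at this
        rw [Finset.sum_ite_eq univ i (fun k => W (Sum.inr k))] at this
        simp only [mem_univ, if_true] at this
        linarith
      have heq : A.mulVec (fun j => W (Sum.inl j) / t) i
          = (∑ j, W (Sum.inl j) * A i j) / t := by
        simp only [mulVec, dotProduct, Finset.sum_div]
        exact Finset.sum_congr rfl fun j _ => by ring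
      rw [heq, hcoord]
      exact div_nonpos_of_nonpos_of_nonneg (neg_nonpos.mpr (hW₀ _)) ht0
  · right
    have hconv : Convex ℝ (convexHull ℝ (Set.range g)) := convex_convexHull ℝ _
    have hclosed : IsClosed (convexHull ℝ (Set.range g)) :=
      ((Set.finite_range g).isCompact_convexHull ℝ).isClosed
    obtain ⟨f, u, hfu, hb⟩ := geometric_hahn_banach_point_closed hconv hclosed h0
    have hu : 0 < u := by simpa using hfu
    have hmem : ∀ i, g i ∈ convexHull ℝ (Set.range g) :=
      fun i => subset_convexHull ℝ _ (Set.mem_range_self i)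
    have hpos : ∀ i : Fin m, u < f (Pi.single i 1) := by
      intro i; simpa [hg] using hb _ (hmem (Sum.inr i))
    have hcol : ∀ j : Fin n, u < f (fun i => A i j) := by
      intro j; simpa [hg] using hb _ (hmem (Sum.inl j))
    set S : ℝ := ∑ i, f (Pi.single i 1) with hS
    have hSpos : 0 < S := by
      apply Finset.sum_pos (fun i _ => hu.trans (hpos i))
      exact Finset.univ_nonempty_iff.mpr (Fin.pos_iff_nonempty.mp hm)
    refine ⟨fun i => f (Pi.single i 1) / S,
      ⟨fun i => div_nonneg (hu.trans (hpos i)).le hSpos.le, ?_⟩, ?_⟩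
    · rw [← Finset.sum_div, ← hS, div_self hSpos.ne']
    · intro j
      have hrep : f (fun i => A i j) = ∑ i, A i j * f (Pi.single i 1) := by
        have hcolrep : (fun i => A i j) = ∑ i, (A i j) • (Pi.single i 1 : Fin m → ℝ) := by
          conv_lhs => rw [pi_eq_sum_univ (fun i => A i j)]
          refine Finset.sum_congr rfl fun i _ => ?_
          congr 1
          ext k; simp [Pi.single_apply, eq_comm]
        rw [hcolrep, map_sum]
        exact Finset.sum_congr rfl fun i _ => by simp
      have heq : ∑ i, (f (Pi.single i 1) / S) * A i j = (f (fun i => A i j)) / S := by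
        rw [hrep, Finset.sum_div]
        exact Finset.sum_congr rfl fun i _ => by ring
      rw [heq]
      exact div_pos (hu.trans (hcol j)) hSpos

section
variable {m n : ℕ} (A : Matrix (Fin m) (Fin n) ℝ)

lemma pay_eq_col (x : Fin m → ℝ) (y : Fin n → ℝ) :
    x ⬝ᵥ A.mulVec y = ∑ j, (∑ i, x i * A i j) * y j := by
  simp only [dotProduct, mulVec, Finset.mul_sum, Finset.sum_mul]
  rw [Finset.sum_comm]
  exact Finset.sum_congr rfl fun j _ => Finset.sum_congr rfl fun i _ => by ring

lemma pay_abs_le {x : Fin m → ℝ} {y : Fin n → ℝ}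
    (hx : x ∈ stdSimplex ℝ (Fin m)) (hy : y ∈ stdSimplex ℝ (Fin n)) :
    |x ⬝ᵥ A.mulVec y| ≤ ∑ i, ∑ j, |A i j| := by
  have hx1 := fun i => mem_Icc_of_mem_stdSimplex hx i
  have hy1 := fun j => mem_Icc_of_mem_stdSimplex hy j
  calc |x ⬝ᵥ A.mulVec y| = |∑ i, ∑ j, x i * (A i j * y j)| := by
        simp only [dotProduct, mulVec, Finset.mul_sum]
    _ ≤ ∑ i, |∑ j, x i * (A i j * y j)| := Finset.abs_sum_le_sum_abs _ _
    _ ≤ ∑ i, ∑ j, |x i * (A i j * y j)| :=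
        Finset.sum_le_sum fun i _ => Finset.abs_sum_le_sum_abs _ _
    _ ≤ ∑ i, ∑ j, |A i j| := by
        refine Finset.sum_le_sum fun i _ => Finset.sum_le_sum fun j _ => ?_
        rw [abs_mul, abs_mul]
        have h1 : |x i| ≤ 1 := abs_le.mpr ⟨by linarith [(hx1 i).1], (hx1 i).2⟩
        have h2 : |y j| ≤ 1 := abs_le.mpr ⟨by linarith [(hy1 j).1], (hy1 j).2⟩
        calc |x i| * (|A i j| * |y j|) ≤ 1 * (|A i j| * 1) := by
              apply mul_le_mul h1 _ (by positivity) zero_le_one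
              exact mul_le_mul_of_nonneg_left h2 (abs_nonneg _)
          _ = |A i j| := by ring
end

theorem stmt0 (m n : Nat) (hm : 0 < m) (hn : 0 < n)
    (A : Matrix (Fin m) (Fin n) Real) :
    (⨆ x : stdSimplex Real (Fin m), ⨅ y : stdSimplex Real (Fin n),
        (x : Fin m → Real) ⬝ᵥ A.mulVec (y : Fin n → Real)) =
    (⨅ y : stdSimplex Real (Fin n), ⨆ x : stdSimplex Real (Fin m),
        (x : Fin m → Real) ⬝ᵥ A.mulVec (y : Fin n → Real)) := by
  classical
  haveI hmΔ : Nonempty (stdSimplex ℝ (Fin m)) :=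
    ⟨⟨_, ite_eq_mem_stdSimplex ℝ (⟨0, hm⟩ : Fin m)⟩⟩
  haveI hnΔ : Nonempty (stdSimplex ℝ (Fin n)) :=
    ⟨⟨_, ite_eq_mem_stdSimplex ℝ (⟨0, hn⟩ : Fin n)⟩⟩
  set M : ℝ := ∑ i, ∑ j, |A i j| with hM
  set P : stdSimplex ℝ (Fin m) → stdSimplex ℝ (Fin n) → ℝ :=
    fun x y => (x : Fin m → ℝ) ⬝ᵥ A.mulVec (y : Fin n → ℝ) with hP
  have hPle : ∀ x y, |P x y| ≤ M := fun x y => pay_abs_le A x.2 y.2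
  have hbdd1 : ∀ x, BddBelow (Set.range fun y => P x y) :=
    fun x => ⟨-M, by rintro _ ⟨y, rfl⟩; linarith [abs_le.mp (hPle x y)]⟩
  have hbdd2 : ∀ x, BddAbove (Set.range fun y => P x y) :=
    fun x => ⟨M, by rintro _ ⟨y, rfl⟩; linarith [abs_le.mp (hPle x y)]⟩
  have hbdd3 : ∀ y, BddAbove (Set.range fun x => P x y) :=
    fun y => ⟨M, by rintro _ ⟨x, rfl⟩; linarith [abs_le.mp (hPle x y)]⟩
  have hbdd4 : ∀ y, BddBelow (Set.range fun x => P x y) :=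
    fun y => ⟨-M, by rintro _ ⟨x, rfl⟩; linarith [abs_le.mp (hPle x y)]⟩
  have hbddF : BddAbove (Set.range fun x => ⨅ y, P x y) := by
    refine ⟨M, ?_⟩
    rintro _ ⟨x, rfl⟩
    obtain ⟨y⟩ := hnΔ
    exact (ciInf_le (hbdd1 x) y).trans (by linarith [abs_le.mp (hPle x y)])
  have hbddG : BddBelow (Set.range fun y => ⨆ x, P x y) := by
    refine ⟨-M, ?_⟩
    rintro _ ⟨y, rfl⟩
    obtain ⟨x⟩ := hmΔ
    exact le_trans (by linarith [abs_le.mp (hPle x y)]) (le_ciSup (hbdd3 y) x)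
  -- weak duality
  have hweak : (⨆ x, ⨅ y, P x y) ≤ ⨅ y, ⨆ x, P x y := by
    refine ciSup_le fun x => le_ciInf fun y => ?_
    exact (ciInf_le (hbdd1 x) y).trans (le_ciSup (hbdd3 y) x)
  refine le_antisymm hweak ?_
  by_contra hlt
  push_neg at hlt
  set v₁ : ℝ := ⨆ x, ⨅ y, P x y
  set v₂ : ℝ := ⨅ y, ⨆ x, P x y
  set c : ℝ := (v₁ + v₂) / 2 with hc
  have hc1 : v₁ < c := by simp only [hc]; linarith
  have hc2 : c < v₂ := by simp only [hc]; linarith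
  rcases minimax_alternative hm (fun i j => A i j - c) with ⟨y, hy, hAy⟩ | ⟨x, hx, hxA⟩
  · -- sup over x is ≤ c, contradicting c < v₂
    have hrow : ∀ i, A.mulVec y i ≤ c := by
      intro i
      have h := hAy i
      simp only [mulVec, dotProduct, sub_mul, Finset.sum_sub_distrib] at h
      have hcy : ∑ j, c * y j = c := by rw [← Finset.mul_sum, hy.2, mul_one]
      simp only [mulVec, dotProduct]
      linarith
    have hsupy : (⨆ x, P x ⟨y, hy⟩) ≤ c := by
      refine ciSup_le fun x => ?_
      calc P x ⟨y, hy⟩ = ∑ i, (x : Fin m → ℝ) i * A.mulVec y i := rfl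
        _ ≤ ∑ i, (x : Fin m → ℝ) i * c :=
            Finset.sum_le_sum fun i _ => mul_le_mul_of_nonneg_left (hrow i) (x.2.1 i)
        _ = c := by rw [← Finset.sum_mul, stdSimplex.sum_eq_one x, one_mul]
    have : v₂ ≤ c := (ciInf_le hbddG ⟨y, hy⟩).trans hsupy
    linarith
  · -- inf over y is ≥ c, contradicting v₁ < c
    have hcol : ∀ j, c ≤ ∑ i, x i * A i j := by
      intro j
      have h := hxA j
      simp only [mul_sub, Finset.sum_sub_distrib] at h
      have hxc : ∑ i, x i * c = c := by rw [← Finset.sum_mul, hx.2, one_mul]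
      linarith
    have hinfx : c ≤ ⨅ y, P ⟨x, hx⟩ y := by
      refine le_ciInf fun y => ?_
      show c ≤ (x : Fin m → ℝ) ⬝ᵥ A.mulVec (y : Fin n → ℝ)
      rw [pay_eq_col]
      calc c = ∑ j, c * (y : Fin n → ℝ) j := by rw [← Finset.mul_sum, stdSimplex.sum_eq_one y, mul_one]
        _ ≤ ∑ j, (∑ i, x i * A i j) * (y : Fin n → ℝ) j :=
            Finset.sum_le_sum fun j _ => mul_le_mul_of_nonneg_right (hcol j) (y.2.1 j)
    have : c ≤ v₁ := hinfx.trans (le_ciSup hbddF ⟨x, hx⟩)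
    linarith
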